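/- Consider the mass-action system in x = (x1,x2,x3) with f1 = −κ1·x1·x2·x3 + κ5·x2, f2 = −κ1·x1·x2·x3 − κ6·x1·x2 + κ4·x1 − κ5·x2, f3 = −κ1·x1·x2·x3 + κ6·x1·x2 − κ3·x3 + κ2, arising from the zero-one network X1+X2+X3 → 0, 0 → X3, X3 → 0, X1 → X1+X2, X2 → X1, X1+X2 → X1+X3. There exist κ ∈ ℝ⁶_{>0} and two distinct points x ≠ y in ℝ³_{>0} with f(κ,x) = f(κ,y) = 0 such that every complex eigenvalue of the Jacobian matrix ((∂f_i/∂x_l)) at x and at y has negative real part. Hence this three-species, six-reaction, three-dimensional zero-one network admits multistability (two exponentially stable positive steady states). -/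

import Mathlib

noncomputable section

/-- The species-formation rate function of the zero-one network
`X1+X2+X3 → 0, 0 → X3, X3 → 0, X1 → X1+X2, X2 → X1, X1+X2 → X1+X3`. -/
def f15 (κ : Fin 6 → ℝ) (x : Fin 3 → ℝ) : Fin 3 → ℝ :=
  ![-(κ 0) * x 0 * x 1 * x 2 + κ 4 * x 1,
    -(κ 0) * x 0 * x 1 * x 2 - κ 5 * x 0 * x 1 + κ 3 * x 0 - κ 4 * x 1,
    -(κ 0) * x 0 * x 1 * x 2 + κ 5 * x 0 * x 1 - κ 2 * x 2 + κ 1]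

/-- The Jacobian matrix of `f15` with respect to `x`. -/
def jac15 (κ : Fin 6 → ℝ) (x : Fin 3 → ℝ) : Matrix (Fin 3) (Fin 3) ℝ :=
  fun i l => deriv (fun t => f15 κ (Function.update x l t) i) (x l)

lemma deriv_eq_of_affine (g : ℝ → ℝ) (c d p : ℝ) (h : ∀ t, g t = c * t + d) :
    deriv g p = c := by
  have hg : g = fun t => c * t + d := funext h
  rw [hg]
  simpa using (((hasDerivAt_id p).const_mul c).add_const d).deriv

lemma jac15_eq (κ : Fin 6 → ℝ) (x : Fin 3 → ℝ) :
    jac15 κ x =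
      !![-κ 0 * x 1 * x 2, -κ 0 * x 0 * x 2 + κ 4, -κ 0 * x 0 * x 1;
         -κ 0 * x 1 * x 2 - κ 5 * x 1 + κ 3, -κ 0 * x 0 * x 2 - κ 5 * x 0 - κ 4, -κ 0 * x 0 * x 1;
         -κ 0 * x 1 * x 2 + κ 5 * x 1, -κ 0 * x 0 * x 2 + κ 5 * x 0, -κ 0 * x 0 * x 1 - κ 2] := by
  funext i l
  fin_cases i <;> fin_cases l <;>
    simp only [jac15, Matrix.cons_val', Matrix.cons_val_zero, Matrix.cons_val_one,
      Matrix.head_cons, Matrix.empty_val', Matrix.cons_val_fin_one, Matrix.head_fin_const,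
      Matrix.cons_val_two, Matrix.tail_cons, Matrix.of_apply, Fin.isValue]
  · exact deriv_eq_of_affine _ _ (κ 4 * x 1) _ fun t => by
      simp [f15, Function.update]; try ring
  · exact deriv_eq_of_affine _ _ 0 _ fun t => by
      simp [f15, Function.update]; try ring
  · exact deriv_eq_of_affine _ _ (κ 4 * x 1) _ fun t => by
      simp [f15, Function.update]; try ring
  · exact deriv_eq_of_affine _ _ (-κ 4 * x 1) _ fun t => by
      simp [f15, Function.update]; try ring
  · exact deriv_eq_of_affine _ _ (κ 3 * x 0) _ fun t => by
      simp [f15, Function.update]; try ring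
  · exact deriv_eq_of_affine _ _ (-κ 5 * x 0 * x 1 + κ 3 * x 0 - κ 4 * x 1) _ fun t => by
      simp [f15, Function.update]; try ring
  · exact deriv_eq_of_affine _ _ (-κ 2 * x 2 + κ 1) _ fun t => by
      simp [f15, Function.update]; try ring
  · exact deriv_eq_of_affine _ _ (-κ 2 * x 2 + κ 1) _ fun t => by
      simp [f15, Function.update]; try ring
  · exact deriv_eq_of_affine _ _ (κ 5 * x 0 * x 1 + κ 1) _ fun t => by
      simp [f15, Function.update]; try ring

lemma cubic_neg_re (a b c : ℝ) (ha : 0 < a) (hc : 0 < c) (hab : c < a * b) (z : ℂ)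
    (hz : z ^ 3 + (a : ℂ) * z ^ 2 + (b : ℂ) * z + (c : ℂ) = 0) : z.re < 0 := by
  by_contra hcon
  push_neg at hcon
  have hb : 0 < b := by nlinarith
  have hre := congrArg Complex.re hz
  have him := congrArg Complex.im hz
  simp only [pow_succ, pow_zero, one_mul, Complex.add_re, Complex.add_im, Complex.mul_re,
    Complex.mul_im, Complex.ofReal_re, Complex.ofReal_im, Complex.zero_re, Complex.zero_im,
    zero_mul, mul_zero, zero_add, add_zero, sub_zero, zero_sub] at hre him
  set u := z.re
  set v := z.im
  by_cases hv : v = 0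
  · rw [hv] at hre
    nlinarith [hre]
  · have h2 : v * (3 * u ^ 2 - v ^ 2 + 2 * a * u + b) = 0 := by linear_combination him
    have h3 : v ^ 2 = 3 * u ^ 2 + 2 * a * u + b := by
      rcases mul_eq_zero.mp h2 with h | h
      · exact absurd h hv
      · nlinarith [h]
    have h4 : -8 * u ^ 3 - 8 * a * u ^ 2 - (2 * b + 2 * a ^ 2) * u + (c - a * b) = 0 := by
      linear_combination hre + (3 * u + a) * h3
    nlinarith [h4, mul_nonneg hcon hcon, mul_nonneg (mul_nonneg hcon hcon) hcon]

lemma det_eq_zero_of_mem_spectrum (M : Matrix (Fin 3) (Fin 3) ℂ) (μ : ℂ)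
    (h : μ ∈ spectrum ℂ M) : (μ • (1 : Matrix (Fin 3) (Fin 3) ℂ) - M).det = 0 := by
  rw [spectrum.mem_iff] at h
  by_contra hd
  exact h ((Matrix.isUnit_iff_isUnit_det _).mpr (isUnit_iff_ne_zero.mpr (by
    rwa [Algebra.algebraMap_eq_smul_one])))

/-- There exist positive rate constants and two distinct positive steady states at which all
complex eigenvalues of the Jacobian have negative real part: this three-species, six-reaction,
three-dimensional zero-one network admits multistability. -/
theorem stmt15 :
    ∃ (κ : Fin 6 → ℝ) (x y : Fin 3 → ℝ),
      (∀ j, 0 < κ j) ∧ (∀ i, 0 < x i) ∧ (∀ i, 0 < y i) ∧ x ≠ y ∧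
      (∀ i, f15 κ x i = 0) ∧ (∀ i, f15 κ y i = 0) ∧
      (∀ μ ∈ spectrum ℂ ((jac15 κ x).map Complex.ofReal), μ.re < 0) ∧
      (∀ μ ∈ spectrum ℂ ((jac15 κ y).map Complex.ofReal), μ.re < 0) := by
  refine ⟨![1, 177/20, 33/20, 48/5, 3, 2/5], ![1, 3/2, 3], ![3, 4, 1],
    ?_, ?_, ?_, ?_, ?_, ?_, ?_, ?_⟩
  · intro j; fin_cases j <;> norm_num
  · intro i; fin_cases i <;> norm_num
  · intro i; fin_cases i <;> norm_num
  · intro h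
    have := congrFun h 0
    norm_num at this
  · intro i; fin_cases i <;>
      norm_num [f15, show ((![1, 177/20, 33/20, 48/5, 3, 2/5] : Fin 6 → ℝ) 4) = 3 from rfl,
        show ((![1, 177/20, 33/20, 48/5, 3, 2/5] : Fin 6 → ℝ) 5) = 2/5 from rfl,
          show ((![1, 177/20, 33/20, 48/5, 3, 2/5] : Fin 6 → ℝ) 2) = 33/20 from rfl,
          show ((![1, 177/20, 33/20, 48/5, 3, 2/5] : Fin 6 → ℝ) 3) = 48/5 from rfl,
          show ((![1, 3/2, 3] : Fin 3 → ℝ) 2) = 3 from rfl]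
  · intro i; fin_cases i <;>
      norm_num [f15, show ((![1, 177/20, 33/20, 48/5, 3, 2/5] : Fin 6 → ℝ) 4) = 3 from rfl,
        show ((![1, 177/20, 33/20, 48/5, 3, 2/5] : Fin 6 → ℝ) 5) = 2/5 from rfl,
          show ((![1, 177/20, 33/20, 48/5, 3, 2/5] : Fin 6 → ℝ) 2) = 33/20 from rfl,
          show ((![1, 177/20, 33/20, 48/5, 3, 2/5] : Fin 6 → ℝ) 3) = 48/5 from rfl,
          show ((![3, 4, 1] : Fin 3 → ℝ) 2) = 1 from rfl]
  · intro μ hμ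
    have hJ : jac15 ![1, 177/20, 33/20, 48/5, 3, 2/5] ![1, 3/2, 3] =
        !![-9/2, 0, -3/2; 9/2, -32/5, -3/2; -39/10, -13/5, -63/20] := by
      rw [jac15_eq]
      norm_num [show ((![1, 177/20, 33/20, 48/5, 3, 2/5] : Fin 6 → ℝ) 4) = 3 from rfl,
        show ((![1, 177/20, 33/20, 48/5, 3, 2/5] : Fin 6 → ℝ) 5) = 2/5 from rfl,
          show ((![1, 177/20, 33/20, 48/5, 3, 2/5] : Fin 6 → ℝ) 2) = 33/20 from rfl,
          show ((![1, 177/20, 33/20, 48/5, 3, 2/5] : Fin 6 → ℝ) 3) = 48/5 from rfl,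
          show ((![1, 3/2, 3] : Fin 3 → ℝ) 2) = 3 from rfl]
    rw [hJ] at hμ
    have hd := det_eq_zero_of_mem_spectrum _ μ hμ
    simp only [Matrix.det_fin_three, Matrix.sub_apply, Matrix.smul_apply, Matrix.one_apply,
      Matrix.map_apply, Matrix.cons_val', Matrix.cons_val_zero, Matrix.cons_val_one,
      Matrix.head_cons, Matrix.empty_val', Matrix.cons_val_fin_one, Matrix.head_fin_const,
      Matrix.cons_val_two, Matrix.tail_cons, Matrix.of_apply, smul_eq_mul] at hd
    norm_num [Fin.ext_iff] at hd
    have key : μ ^ 3 + ((281/20 : ℝ) : ℂ) * μ ^ 2 + ((10677/200 : ℝ) : ℂ) * μ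
        + ((909/50 : ℝ) : ℂ) = 0 := by
      push_cast
      linear_combination hd
    exact cubic_neg_re _ _ _ (by norm_num) (by norm_num) (by norm_num) μ key
  · intro μ hμ
    have hJ : jac15 ![1, 177/20, 33/20, 48/5, 3, 2/5] ![3, 4, 1] =
        !![-4, 0, -12; 4, -36/5, -12; -12/5, -9/5, -273/20] := by
      rw [jac15_eq]
      norm_num [show ((![1, 177/20, 33/20, 48/5, 3, 2/5] : Fin 6 → ℝ) 4) = 3 from rfl,
        show ((![1, 177/20, 33/20, 48/5, 3, 2/5] : Fin 6 → ℝ) 5) = 2/5 from rfl,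
          show ((![1, 177/20, 33/20, 48/5, 3, 2/5] : Fin 6 → ℝ) 2) = 33/20 from rfl,
          show ((![1, 177/20, 33/20, 48/5, 3, 2/5] : Fin 6 → ℝ) 3) = 48/5 from rfl,
          show ((![3, 4, 1] : Fin 3 → ℝ) 2) = 1 from rfl]
    rw [hJ] at hμ
    have hd := det_eq_zero_of_mem_spectrum _ μ hμ
    simp only [Matrix.det_fin_three, Matrix.sub_apply, Matrix.smul_apply, Matrix.one_apply,
      Matrix.map_apply, Matrix.cons_val', Matrix.cons_val_zero, Matrix.cons_val_one,
      Matrix.head_cons, Matrix.empty_val', Matrix.cons_val_fin_one, Matrix.head_fin_const,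
      Matrix.cons_val_two, Matrix.tail_cons, Matrix.of_apply, smul_eq_mul] at hd
    norm_num [Fin.ext_iff] at hd
    have key : μ ^ 3 + ((497/20 : ℝ) : ℂ) * μ ^ 2 + ((3282/25 : ℝ) : ℂ) * μ
        + ((324/25 : ℝ) : ℂ) = 0 := by
      push_cast
      linear_combination hd
    exact cubic_neg_re _ _ _ (by norm_num) (by norm_num) (by norm_num) μ key
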